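/- There exists ε > 0 such that for all f ∈ (0, ε): E(U^(M)(f,·)) = Σ_{n=1}^N U_n^{(M,N)}·log(1 + f·t_n/t̂), where U_n^{(M,N)} := Σ p_1^{x_1}···p_N^{x_N}·(M!/(x_1!···x_N!))·x_n ≥ 0, the sum running over all (x_1,…,x_N) ∈ ℕ_0^N with Σ_{i=1}^N x_i = M and Σ_{i=1}^N x_i·t_i > 0. -/

import Mathlib

open scoped Classical
open Finset MvPolynomial

/-- count of occurrences of `n` among values of `ω` -/
def cntAux {N M : ℕ} (ω : Fin M → Fin N) (n : Fin N) : ℕ :=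
  (Finset.univ.filter (fun j => ω j = n)).card

lemma log_one_add_le (x : ℝ) (h : 0 < 1 + x) : Real.log (1 + x) ≤ x := by
  have := Real.log_le_sub_one_of_pos h
  linarith

lemma log_one_add_ge (x : ℝ) (h : -(1/2) ≤ x) : x - 2 * x ^ 2 ≤ Real.log (1 + x) := by
  have h1 : (0:ℝ) < 1 + x := by linarith
  have h2 : (0:ℝ) < (1 + x)⁻¹ := by positivity
  have h3 := Real.log_le_sub_one_of_pos h2
  rw [Real.log_inv] at h3
  have h4 : x / (1 + x) ≤ Real.log (1 + x) := by
    have e : (1+x)⁻¹ - 1 = -(x/(1+x)) := by field_simp; ring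
    rw [e] at h3; linarith
  have h5 : x - 2 * x ^ 2 ≤ x / (1 + x) := by
    rw [le_div_iff₀ h1]
    nlinarith [sq_nonneg x]
  linarith

lemma cntAux_sum {N M : ℕ} (ω : Fin M → Fin N) : ∑ n, cntAux ω n = M := by
  unfold cntAux
  rw [← Finset.card_eq_sum_card_fiberwise (fun j _ => Finset.mem_univ (ω j))]
  simp

lemma cntAux_le {N M : ℕ} (ω : Fin M → Fin N) (n : Fin N) : cntAux ω n ≤ M := by
  have h := Finset.single_le_sum (f := cntAux ω) (fun i _ => Nat.zero_le _) (Finset.mem_univ n)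
  rwa [cntAux_sum ω] at h

lemma prod_comp_eq {N M : ℕ} (p : Fin N → ℝ) (ω : Fin M → Fin N) :
    ∏ j, p (ω j) = ∏ n, p n ^ cntAux ω n := by
  unfold cntAux
  rw [← Finset.prod_fiberwise_of_maps_to (fun j _ => Finset.mem_univ (ω j)) (fun j => p (ω j))]
  refine Finset.prod_congr rfl fun n _ => ?_
  rw [Finset.prod_congr rfl (fun j hj => by rw [(Finset.mem_filter.mp hj).2]), Finset.prod_const]

lemma sum_comp_eq {N M : ℕ} (g : Fin N → ℝ) (ω : Fin M → Fin N) :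
    ∑ j, g (ω j) = ∑ n, (cntAux ω n : ℝ) * g n := by
  unfold cntAux
  rw [← Finset.sum_fiberwise_of_maps_to (fun j _ => Finset.mem_univ (ω j)) (fun j => g (ω j))]
  refine Finset.sum_congr rfl fun n _ => ?_
  rw [Finset.sum_congr rfl (fun j hj => by rw [(Finset.mem_filter.mp hj).2]), Finset.sum_const,
    nsmul_eq_mul]

lemma prod_X_pow_univ {N : ℕ} (x : Fin N → ℕ) :
    ∏ n, (X n : MvPolynomial (Fin N) ℕ) ^ x n
      = monomial (Finsupp.equivFunOnFinite.symm x) (1 : ℕ) := by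
  rw [← prod_X_pow_eq_monomial]
  refine (Finset.prod_subset (Finset.subset_univ _) ?_).symm.trans
    (Finset.prod_congr rfl fun n _ => ?_)
  · intro n _ hn
    have h0 : (Finsupp.equivFunOnFinite.symm x) n = 0 :=
      Finsupp.notMem_support_iff.mp hn
    have h0' : x n = 0 := h0
    rw [h0', pow_zero]
  · rfl

lemma card_fiber (N M : ℕ) (x : Fin N → ℕ) (hx : ∑ n, x n = M) :
    ((Finset.univ : Finset (Fin M → Fin N)).filter (fun ω => cntAux ω = x)).card
    = Nat.multinomial Finset.univ x := by
  classical
  have key : (∑ ω : Fin M → Fin N, ∏ j, (X (ω j) : MvPolynomial (Fin N) ℕ))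
      = ∑ k ∈ Finset.piAntidiag Finset.univ M,
          (Nat.multinomial Finset.univ k : MvPolynomial (Fin N) ℕ) * ∏ i, X i ^ k i := by
    rw [← Fintype.sum_pow, Finset.sum_pow_eq_sum_piAntidiag]
  have hc : ∀ ω : Fin M → Fin N, (∏ j, (X (ω j) : MvPolynomial (Fin N) ℕ))
      = monomial (Finsupp.equivFunOnFinite.symm (cntAux ω)) 1 := by
    intro ω
    rw [← prod_X_pow_univ]
    unfold cntAux
    rw [← Finset.prod_fiberwise_of_maps_to (fun j _ => Finset.mem_univ (ω j))
      (fun j => (X (ω j) : MvPolynomial (Fin N) ℕ))]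
    refine Finset.prod_congr rfl fun n _ => ?_
    rw [Finset.prod_congr rfl (fun j hj => by rw [(Finset.mem_filter.mp hj).2]),
      Finset.prod_const]
  have hinj : Function.Injective (Finsupp.equivFunOnFinite.symm : (Fin N → ℕ) → _) :=
    Finsupp.equivFunOnFinite.symm.injective
  have key2 := congrArg (MvPolynomial.coeff (Finsupp.equivFunOnFinite.symm x)) key
  rw [MvPolynomial.coeff_sum, MvPolynomial.coeff_sum] at key2
  simp only [hc, prod_X_pow_univ, ← MvPolynomial.C_eq_coe_nat, MvPolynomial.coeff_C_mul,
    MvPolynomial.coeff_monomial, Nat.cast_id] at key2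
  have hL : (∑ ω : Fin M → Fin N,
      (if Finsupp.equivFunOnFinite.symm (cntAux ω)
          = Finsupp.equivFunOnFinite.symm x then (1:ℕ) else 0))
      = ((Finset.univ : Finset (Fin M → Fin N)).filter (fun ω => cntAux ω = x)).card := by
    simp only [hinj.eq_iff]
    rw [Finset.sum_boole, Nat.cast_id]
  have hR : (∑ k ∈ Finset.piAntidiag Finset.univ M,
      Nat.multinomial Finset.univ k *
        (if Finsupp.equivFunOnFinite.symm k = Finsupp.equivFunOnFinite.symm x then (1:ℕ) else 0))
      = Nat.multinomial Finset.univ x := by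
    rw [Finset.sum_eq_single x]
    · simp
    · intro k _ hk
      rw [if_neg (fun h => hk (hinj h)), mul_zero]
    · intro hxmem
      exact absurd (Finset.mem_piAntidiag.mpr ⟨hx, fun i _ => Finset.mem_univ i⟩) hxmem
  rw [hL, hR] at key2
  exact key2

lemma max_log_eq {M : ℕ} (u : Fin M → ℝ)
    (hpos : ∀ j, 0 < 1 + u j) (hhalf : ∀ j, -(1/2) ≤ u j) :
    (¬ 0 < ∑ j, u j → Real.log (max 1 (∏ j, (1 + u j))) = 0) ∧
    ((0 ≤ ∑ j, (u j - 2 * (u j)^2)) →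
      Real.log (max 1 (∏ j, (1 + u j))) = ∑ j, Real.log (1 + u j)) := by
  have hprodpos : 0 < ∏ j, (1 + u j) := Finset.prod_pos fun j _ => hpos j
  have hlog : Real.log (∏ j, (1 + u j)) = ∑ j, Real.log (1 + u j) :=
    Real.log_prod fun j _ => (hpos j).ne'
  constructor
  · intro hS
    have h1 : Real.log (∏ j, (1 + u j)) ≤ 0 := by
      rw [hlog]
      calc ∑ j, Real.log (1 + u j) ≤ ∑ j, u j :=
            Finset.sum_le_sum fun j _ => log_one_add_le (u j) (hpos j)
        _ ≤ 0 := le_of_not_gt hS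
    have : ∏ j, (1 + u j) ≤ 1 := (Real.log_nonpos_iff hprodpos.le).mp h1
    rw [max_eq_left this, Real.log_one]
  · intro hS2
    have h1 : 0 ≤ Real.log (∏ j, (1 + u j)) := by
      rw [hlog]
      calc (0:ℝ) ≤ ∑ j, (u j - 2*(u j)^2) := hS2
        _ ≤ ∑ j, Real.log (1 + u j) :=
            Finset.sum_le_sum fun j _ => log_one_add_ge (u j) (hhalf j)
    have : 1 ≤ ∏ j, (1 + u j) := (Real.log_nonneg_iff hprodpos).mp h1
    rw [max_eq_right this, hlog]

theorem stmt_8 (N : ℕ) (hN : 1 ≤ N) (t : Fin N → ℝ) (ht : ∀ i, t i ≠ 0)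
    (hneg : ∃ i, t i < 0) (that : ℝ)
    (hthat : IsGreatest {x : ℝ | ∃ i, t i < 0 ∧ x = |t i|} that)
    (hthat_pos : 0 < that)
    (p : Fin N → ℝ) (hp : ∀ i, 0 < p i) (hpsum : ∑ i, p i = 1)
    (M : ℕ) (hM : 1 ≤ M)
    (U : Fin N → ℝ)
    (hU : ∀ n, U n =
      ∑ x ∈ Finset.univ.filter (fun x : Fin N → Fin (M + 1) =>
          (∑ i, (x i : ℕ)) = M ∧ 0 < ∑ i, ((x i : ℕ) : ℝ) * t i),
        (∏ i, p i ^ (x i : ℕ)) *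
          (Nat.multinomial Finset.univ (fun i => (x i : ℕ)) : ℝ) * ((x n : ℕ) : ℝ)) :
    ∃ ε > 0, ∀ f : ℝ, 0 < f → f < ε →
      ∑ ω : Fin M → Fin N,
          (∏ j, p (ω j)) * Real.log (max 1 (∏ j, (1 + f * t (ω j) / that)))
        = ∑ n, U n * Real.log (1 + f * t n / that) := by
  classical
  have hNne : Nonempty (Fin N) := ⟨⟨0, hN⟩⟩
  have hMne : Nonempty (Fin M) := ⟨⟨0, hM⟩⟩
  -- constants
  set S : (Fin M → Fin N) → ℝ := fun ω => ∑ j, t (ω j) with hSdef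
  set Q : (Fin M → Fin N) → ℝ := fun ω => ∑ j, (t (ω j))^2 with hQdef
  have hQpos : ∀ ω, 0 < Q ω := fun ω =>
    Finset.sum_pos (fun j _ => by have := ht (ω j); positivity) Finset.univ_nonempty
  set C : ℝ := that + ∑ i, |t i| with hCdef
  have hCpos : 0 < C :=
    add_pos_of_pos_of_nonneg hthat_pos (Finset.sum_nonneg fun i _ => abs_nonneg _)
  have hCt : ∀ i, |t i| ≤ C := by
    intro i
    calc |t i| ≤ ∑ i, |t i| :=
          Finset.single_le_sum (f := fun i => |t i|) (fun i _ => abs_nonneg _) (Finset.mem_univ i)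
      _ ≤ C := le_add_of_nonneg_left hthat_pos.le
  refine ⟨Finset.univ.inf' Finset.univ_nonempty
    (fun ω : Fin M → Fin N => if 0 < S ω then min (that/(2*C)) (S ω * that/(2*Q ω))
      else that/(2*C)), ?_, ?_⟩
  · simp only [gt_iff_lt, Finset.lt_inf'_iff]
    intro ω _
    split_ifs with h
    · refine lt_min (by positivity) ?_
      have hQω := hQpos ω
      positivity
    · positivity
  intro f hf0 hfε
  have hεle : ∀ ω : Fin M → Fin N, 0 < S ω → f < S ω * that / (2 * Q ω) := by
    intro ω hS
    refine lt_of_lt_of_le hfε (le_trans (Finset.inf'_le _ (Finset.mem_univ ω)) ?_)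
    rw [if_pos hS]; exact min_le_right _ _
  have hfC : f < that/(2*C) := by
    obtain ⟨ω0⟩ := (inferInstance : Nonempty (Fin M → Fin N))
    refine lt_of_lt_of_le hfε (le_trans (Finset.inf'_le _ (Finset.mem_univ ω0)) ?_)
    split_ifs with h
    · exact min_le_left _ _
    · exact le_rfl
  have hsmall : ∀ i, |f * t i / that| < 1/2 := by
    intro i
    have h2C : f * (2*C) < that := (lt_div_iff₀ (by positivity)).mp hfC
    rw [abs_div, abs_mul, abs_of_pos hf0, abs_of_pos hthat_pos, div_lt_iff₀ hthat_pos]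
    nlinarith [mul_le_mul_of_nonneg_left (hCt i) hf0.le]
  have hpos : ∀ i, 0 < 1 + f * t i / that := by
    intro i; have := (abs_lt.mp (hsmall i)).1; linarith
  have hhalf : ∀ i, -(1/2:ℝ) ≤ f * t i / that := by
    intro i; have := (abs_lt.mp (hsmall i)).1; linarith
  -- per-ω case analysis
  have hmax : ∀ ω : Fin M → Fin N,
      Real.log (max 1 (∏ j, (1 + f * t (ω j) / that))) =
        if 0 < S ω then ∑ j, Real.log (1 + f * t (ω j) / that) else 0 := by
    intro ω
    obtain ⟨h0, h1⟩ := max_log_eq (fun j => f * t (ω j) / that)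
        (fun j => hpos _) (fun j => hhalf _)
    split_ifs with hS
    · refine h1 ?_
      have h2Q : f * (2 * Q ω) < S ω * that :=
        (lt_div_iff₀ (by have := hQpos ω; positivity)).mp (hεle ω hS)
      have hsum_eq : ∑ j, (f * t (ω j)/that - 2*(f * t (ω j)/that)^2)
          = (f/that) * S ω - (2*(f/that)^2) * Q ω := by
        rw [hSdef, hQdef]
        simp only
        rw [Finset.mul_sum, Finset.mul_sum, ← Finset.sum_sub_distrib]
        exact Finset.sum_congr rfl fun j _ => by ring
      rw [hsum_eq]
      have heq : (f/that) * S ω - (2*(f/that)^2) * Q ω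
          = (f * S ω * that - 2 * f^2 * Q ω) / that^2 := by
        field_simp
      rw [heq]
      apply div_nonneg _ (sq_nonneg that)
      nlinarith [mul_lt_mul_of_pos_left h2Q hf0]
    · refine h0 (fun hc => hS ?_)
      have he : ∑ j, f * t (ω j) / that = (f/that) * S ω := by
        rw [hSdef]
        simp only
        rw [Finset.mul_sum]
        exact Finset.sum_congr rfl fun j _ => by ring
      rw [he] at hc
      have hft : (0:ℝ) < f/that := by positivity
      by_contra hS'
      push_neg at hS'
      nlinarith [mul_nonpos_of_nonneg_of_nonpos hft.le hS']
  -- rewrite the left-hand side fiberwise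
  have hlt : ∀ (ω : Fin M → Fin N) (n : Fin N), cntAux ω n < M + 1 :=
    fun ω n => Nat.lt_succ_of_le (cntAux_le ω n)
  set L : Fin N → ℝ := fun n => Real.log (1 + f * t n / that) with hLdef
  set Cnt : (Fin M → Fin N) → (Fin N → Fin (M+1)) := fun ω n => ⟨cntAux ω n, hlt ω n⟩
    with hCntdef
  have hcard : ∀ y : Fin N → Fin (M+1),
      ((Finset.univ : Finset (Fin M → Fin N)).filter (fun ω => Cnt ω = y)).card
        = if (∑ n, ((y n : ℕ))) = M then Nat.multinomial Finset.univ (fun n => (y n : ℕ))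
          else 0 := by
    intro y
    split_ifs with hy
    · rw [← card_fiber N M (fun n => (y n:ℕ)) hy]
      congr 1
      apply Finset.filter_congr
      intro ω _
      constructor
      · intro h
        funext n
        exact congrArg (fun g => ((g n : Fin (M+1)) : ℕ)) h
      · intro h
        funext n
        exact Fin.ext (congrFun h n)
    · rw [Finset.card_eq_zero, Finset.filter_eq_empty_iff]
      intro ω _ h
      apply hy
      have : ∀ n, (y n : ℕ) = cntAux ω n := fun n => by
        rw [← h]
      rw [Finset.sum_congr rfl fun n _ => this n]
      exact cntAux_sum ω
  calc ∑ ω : Fin M → Fin N,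
          (∏ j, p (ω j)) * Real.log (max 1 (∏ j, (1 + f * t (ω j) / that)))
      = ∑ ω : Fin M → Fin N, (if 0 < ∑ n, ((cntAux ω n : ℕ) : ℝ) * t n then
          (∏ n, p n ^ cntAux ω n) * (∑ n, (cntAux ω n : ℝ) * L n) else 0) := by
        refine Finset.sum_congr rfl fun ω _ => ?_
        rw [hmax ω, mul_ite, mul_zero]
        have e1 : S ω = ∑ n, (cntAux ω n : ℝ) * t n := sum_comp_eq t ω
        have e2 : ∑ j, Real.log (1 + f * t (ω j) / that) = ∑ n, (cntAux ω n : ℝ) * L n :=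
          sum_comp_eq L ω
        rw [← e1, ← e2, ← prod_comp_eq p ω]
    _ = ∑ y : Fin N → Fin (M+1), ∑ ω ∈ Finset.univ.filter (fun ω => Cnt ω = y),
          (if 0 < ∑ n, ((cntAux ω n : ℕ) : ℝ) * t n then
          (∏ n, p n ^ cntAux ω n) * (∑ n, (cntAux ω n : ℝ) * L n) else 0) :=
        (Finset.sum_fiberwise_of_maps_to (fun ω _ => Finset.mem_univ (Cnt ω)) _).symm
    _ = ∑ y : Fin N → Fin (M+1),
          (if (∑ n, ((y n : ℕ))) = M then
            (Nat.multinomial Finset.univ (fun n => (y n : ℕ)) : ℝ) else 0) *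
          (if 0 < ∑ n, ((y n : ℕ) : ℝ) * t n then
            (∏ n, p n ^ (y n : ℕ)) * (∑ n, ((y n : ℕ) : ℝ) * L n) else 0) := by
        refine Finset.sum_congr rfl fun y _ => ?_
        calc ∑ ω ∈ Finset.univ.filter (fun ω => Cnt ω = y),
              (if 0 < ∑ n, ((cntAux ω n : ℕ) : ℝ) * t n then
                (∏ n, p n ^ cntAux ω n) * (∑ n, (cntAux ω n : ℝ) * L n) else 0)
            = ∑ _ω ∈ Finset.univ.filter (fun ω => Cnt ω = y),
              (if 0 < ∑ n, ((y n : ℕ) : ℝ) * t n then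
                (∏ n, p n ^ (y n : ℕ)) * (∑ n, ((y n : ℕ) : ℝ) * L n) else 0) := by
              refine Finset.sum_congr rfl fun ω hω => ?_
              have hωy : Cnt ω = y := (Finset.mem_filter.mp hω).2
              have hcy : ∀ n, cntAux ω n = (y n : ℕ) := fun n => by rw [← hωy]
              simp only [hcy]
          _ = ((Finset.univ.filter (fun ω : Fin M → Fin N => Cnt ω = y)).card) •
              (if 0 < ∑ n, ((y n : ℕ) : ℝ) * t n then
                (∏ n, p n ^ (y n : ℕ)) * (∑ n, ((y n : ℕ) : ℝ) * L n) else 0) :=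
              Finset.sum_const _
          _ = _ := by
              rw [hcard y]
              split_ifs <;> simp
    _ = ∑ y ∈ Finset.univ.filter (fun y : Fin N → Fin (M + 1) =>
          (∑ i, (y i : ℕ)) = M ∧ 0 < ∑ i, ((y i : ℕ) : ℝ) * t i),
          (Nat.multinomial Finset.univ (fun n => (y n : ℕ)) : ℝ) *
            ((∏ n, p n ^ (y n : ℕ)) * (∑ n, ((y n : ℕ) : ℝ) * L n)) := by
        rw [Finset.sum_filter]
        refine Finset.sum_congr rfl fun y _ => ?_
        by_cases h1 : (∑ n, ((y n : ℕ))) = M <;> by_cases h2 : 0 < ∑ n, ((y n : ℕ) : ℝ) * t n <;>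
          simp [h1, h2]
    _ = ∑ n, U n * Real.log (1 + f * t n / that) := by
        have hLn : ∀ n, Real.log (1 + f * t n / that) = L n := fun n => by rw [hLdef]
        simp only [hU, hLn]
        calc ∑ y ∈ Finset.univ.filter (fun y : Fin N → Fin (M + 1) =>
                (∑ i, (y i : ℕ)) = M ∧ 0 < ∑ i, ((y i : ℕ) : ℝ) * t i),
              (Nat.multinomial Finset.univ (fun n => (y n : ℕ)) : ℝ) *
                ((∏ n, p n ^ (y n : ℕ)) * (∑ n, ((y n : ℕ) : ℝ) * L n))
            = ∑ y ∈ Finset.univ.filter (fun y : Fin N → Fin (M + 1) =>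
                (∑ i, (y i : ℕ)) = M ∧ 0 < ∑ i, ((y i : ℕ) : ℝ) * t i),
              ∑ n, ((∏ i, p i ^ (y i : ℕ)) *
                (Nat.multinomial Finset.univ (fun i => (y i : ℕ)) : ℝ) * ((y n : ℕ) : ℝ)) * L n := by
              refine Finset.sum_congr rfl fun y _ => ?_
              simp only [Finset.mul_sum]
              exact Finset.sum_congr rfl fun n _ => by ring
          _ = ∑ n, ∑ y ∈ Finset.univ.filter (fun y : Fin N → Fin (M + 1) =>
                (∑ i, (y i : ℕ)) = M ∧ 0 < ∑ i, ((y i : ℕ) : ℝ) * t i),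
              ((∏ i, p i ^ (y i : ℕ)) *
                (Nat.multinomial Finset.univ (fun i => (y i : ℕ)) : ℝ) * ((y n : ℕ) : ℝ)) * L n :=
              Finset.sum_comm
          _ = ∑ n, (∑ y ∈ Finset.univ.filter (fun y : Fin N → Fin (M + 1) =>
                (∑ i, (y i : ℕ)) = M ∧ 0 < ∑ i, ((y i : ℕ) : ℝ) * t i),
              (∏ i, p i ^ (y i : ℕ)) *
                (Nat.multinomial Finset.univ (fun i => (y i : ℕ)) : ℝ) * ((y n : ℕ) : ℝ)) * L n :=
              Finset.sum_congr rfl fun n _ => (Finset.sum_mul _ _ _).symm
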